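/- arXiv:1506.06080 — 10 statements merged into one kernel-verified Lean document; each statement's English description precedes it below -/
import Mathlib

section
/- For every topological space T, δ(T) ≤ π(T), where δ(T) is the supremum of densities of dense subsets of T and π(T) is the π-weight of T. In particular, every space with a countable π-base is dense-separable. -/
open Cardinal Set TopologicalSpace

universe u

/-- The density of a topological space: least cardinality of a dense subset. -/
noncomputable def densityCard (X : Type u) [TopologicalSpace X] : Cardinal.{u} :=
  sInf {c | ∃ D : Set X, Dense D ∧ #D = c}

/-- δ(X): the supremum of the densities of dense subspaces of `X`. -/
noncomputable def deltaCard (X : Type u) [TopologicalSpace X] : Cardinal.{u} :=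
  ⨆ D : {D : Set X // Dense D}, densityCard ↥(D.1)

/-- A π-base: a family of nonempty open sets such that every nonempty open set
contains a member of the family. -/
def IsPiBase {X : Type u} [TopologicalSpace X] (B : Set (Set X)) : Prop :=
  (∀ U ∈ B, IsOpen U ∧ U.Nonempty) ∧
  ∀ U : Set X, IsOpen U → U.Nonempty → ∃ V ∈ B, V ⊆ U

/-- The π-weight: least cardinality of a π-base. -/
noncomputable def piWeight (X : Type u) [TopologicalSpace X] : Cardinal.{u} :=
  sInf {c | ∃ B : Set (Set X), IsPiBase B ∧ #B = c}

/-- The weight: least cardinality of a base of the topology. -/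
noncomputable def weightCard (X : Type u) [TopologicalSpace X] : Cardinal.{u} :=
  sInf {c | ∃ B : Set (Set X), IsTopologicalBasis B ∧ #B = c}

/-- The set of points played by Player II before stage `β`. -/
def PlayedSet {X : Type u} (x : Ordinal.{u} → X) (β : Ordinal.{u}) : Set X :=
  {p | ∃ α < β, x α = p}

/-- Player I has a winning strategy in the open-point game `G_{X,θ}`:
there is a strategy `U` assigning to each history of points played by Player II a
nonempty open set (at positions where the played points are not yet dense), depending
only on the initial segment of the history, such that in every run in which Player II
plays legally, the set of played points becomes dense at some stage `β < θ`. -/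
def PlayerIWins (X : Type u) [TopologicalSpace X] (θ : Ordinal.{u}) : Prop :=
  ∃ U : (Ordinal.{u} → X) → Ordinal.{u} → Set X,
    (∀ x β, ¬ Dense (PlayedSet x β) → IsOpen (U x β) ∧ (U x β).Nonempty) ∧
    (∀ x y β, (∀ α < β, x α = y α) → U x β = U y β) ∧
    ∀ x : Ordinal.{u} → X, (∀ β < θ, ¬ Dense (PlayedSet x β) → x β ∈ U x β) →
      ∃ β < θ, Dense (PlayedSet x β)

/-- gd(X): the least infinite cardinal κ such that Player I has a winning strategy
in the open-point game `G_{X,κ⁺}`. -/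
noncomputable def gd (X : Type u) [TopologicalSpace X] : Cardinal.{u} :=
  sInf {κ | ℵ₀ ≤ κ ∧ PlayerIWins X (Order.succ κ).ord}


/-- Key lemma: from a π-base `B` and a dense set `D`, extract a dense subset of `↥D`
of size at most `#B`. -/
theorem key_lemma {X : Type u} [TopologicalSpace X] {B : Set (Set X)} (hB : IsPiBase B)
    {D : Set X} (hD : Dense D) : ∃ E : Set ↥D, Dense E ∧ #E ≤ #B := by
  have hch : ∀ V : B, ∃ p, p ∈ V.1 ∩ D := by
    intro V
    obtain ⟨hVo, hVne⟩ := hB.1 V.1 V.2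
    exact hD.inter_open_nonempty V.1 hVo hVne
  choose p hp using hch
  let f : B → ↥D := fun V => ⟨p V, (hp V).2⟩
  refine ⟨Set.range f, ?_, Cardinal.mk_range_le⟩
  rw [dense_iff_inter_open]
  rintro U hU ⟨⟨u, huD⟩, huU⟩
  obtain ⟨W, hWo, rfl⟩ := isOpen_induced_iff.mp hU
  have hWne : (W ∩ D).Nonempty := ⟨u, huU, huD⟩
  obtain ⟨V, hVB, hVW⟩ := hB.2 W hWo ⟨u, huU⟩
  refine ⟨f ⟨V, hVB⟩, ?_, ⟨⟨V, hVB⟩, rfl⟩⟩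
  exact hVW (hp ⟨V, hVB⟩).1

theorem piBase_all (X : Type u) [TopologicalSpace X] :
    IsPiBase {U : Set X | IsOpen U ∧ U.Nonempty} :=
  ⟨fun _ h => h, fun U hU hne => ⟨U, ⟨hU, hne⟩, le_refl _⟩⟩

/-- For every topological space `T`, `δ(T) ≤ π(T)`; in particular every
space with a countable π-base is dense-separable. -/
theorem stmt0 (T : Type u) [TopologicalSpace T] :
    deltaCard T ≤ piWeight T ∧
      ((∃ B : Set (Set T), B.Countable ∧ IsPiBase B) →
        ∀ A : Set T, Dense A → SeparableSpace ↥A) := by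
  constructor
  · refine ciSup_le' fun D => ?_
    refine le_csInf ⟨_, ⟨_, piBase_all T, rfl⟩⟩ ?_
    rintro c ⟨B, hB, rfl⟩
    -- B restricted to D's subspace? use key_lemma directly
    obtain ⟨E, hE, hEle⟩ := key_lemma hB D.2
    exact le_trans (csInf_le' ⟨E, hE, rfl⟩) hEle
  · rintro ⟨B, hBc, hB⟩ A hA
    obtain ⟨E, hE, hEle⟩ := key_lemma hB hA
    refine ⟨⟨E, ?_, hE⟩⟩
    rw [← Set.countable_coe_iff, ← Cardinal.mk_le_aleph0_iff] at *
    exact le_trans hEle hBc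
end

section
/- If S is a subset of a topological space T satisfying closure(interior(closure(S))) = closure(S) (for example S open or S dense), then gd(S) ≤ gd(T), where gd denotes the least cardinal κ such that Player I has a winning strategy in the open-point game of length κ⁺ on the space. -/
open Cardinal Set TopologicalSpace

universe u

/-!
Player I on `S` wins by simulating a winning strategy `V` for `T` with the same length. Let
`W = interior (closure S)`. When `V` proposes an open set meeting `W`, Player I proposes its
trace on `W ∩ S`, which is nonempty because `W ⊆ closure S`, and copies the answer into the
simulated run; otherwise he answers `V` himself with a point of the proposed set, necessarily
outside `W`. So every point of the simulated run lying in `W` was played in `S`, and since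
`S ⊆ closure W`, the `S`-run is dense as soon as the simulated run is.

That `gd T` is the infimum of a nonempty set, as needed to compare the two infima, holds because
Player I wins every game longer than `#(Set T)` by proposing each nonempty open set in turn.
-/

section Exhaustion

variable {X : Type u} [TopologicalSpace X]

theorem nonempty_of_not_dense {s : Set X} (hs : ¬Dense s) : Nonempty X :=
  not_isEmpty_iff.mp fun _ => hs (Subsingleton.elim (Set.univ : Set X) s ▸ dense_univ)

theorem playerIWins_of_ord_lt {θ : Ordinal.{u}} (hθ : (#(Set X)).ord < θ) :
    PlayerIWins X θ := by
  classical
  obtain ⟨r, _, hr⟩ := Cardinal.exists_ord_eq (Set X)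
  let index : Set X → Ordinal.{u} := Ordinal.typein r
  have index_lt (O : Set X) : index O < θ := (Ordinal.typein_lt_type r O).trans (hr ▸ hθ)
  refine ⟨fun _ β => if h : ∃ O, IsOpen O ∧ O.Nonempty ∧ index O = β then h.choose else univ,
    fun _ β hnd => ?_, fun _ _ _ _ => rfl, fun x hx => ?_⟩
  · beta_reduce
    split_ifs with h
    · exact ⟨h.choose_spec.1, h.choose_spec.2.1⟩
    · exact ⟨isOpen_univ, @univ_nonempty _ (nonempty_of_not_dense hnd)⟩
  by_contra! hnd
  refine hnd _ hθ (dense_iff_inter_open.mpr fun O hO hne => ?_)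
  have h : ∃ O', IsOpen O' ∧ O'.Nonempty ∧ index O' = index O := ⟨O, hO, hne, rfl⟩
  have hplay := hx (index O) (index_lt O) (hnd _ (index_lt O))
  beta_reduce at hplay
  rw [dif_pos h, Ordinal.typein_injective r h.choose_spec.2.2] at hplay
  exact ⟨x (index O), hplay, index O, Ordinal.typein_lt_type r O |>.trans_eq hr.symm, rfl⟩

theorem exists_playerIWins_succ_ord (X : Type u) [TopologicalSpace X] :
    ∃ κ : Cardinal.{u}, ℵ₀ ≤ κ ∧ PlayerIWins X (Order.succ κ).ord :=
  ⟨ℵ₀ ⊔ #(Set X), le_sup_left, playerIWins_of_ord_lt <| Cardinal.ord_lt_ord.mpr <|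
    le_sup_right.trans_lt (Order.lt_succ _)⟩

end Exhaustion

section Simulation

variable {T : Type u}

def DependsOnPast (V : (Ordinal.{u} → T) → Ordinal.{u} → Set T) : Prop :=
  ∀ x y β, (∀ α < β, x α = y α) → V x β = V y β

noncomputable def simulate (V : (Ordinal.{u} → T) → Ordinal.{u} → Set T)
    (reply : Set T → T → T) (y : Ordinal.{u} → T) : Ordinal.{u} → T :=
  Ordinal.lt_wf.fix fun β run => reply (V (fun α => if h : α < β then run α h else y α) β) (y β)

variable {V : (Ordinal.{u} → T) → Ordinal.{u} → Set T} (reply : Set T → T → T)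

theorem simulate_apply (hV : DependsOnPast V) (y : Ordinal.{u} → T) (β : Ordinal.{u}) :
    simulate V reply y β = reply (V (simulate V reply y) β) (y β) := by
  rw [simulate, Ordinal.lt_wf.fix_eq]
  congr 1
  exact hV _ _ β fun α hα => dif_pos hα

theorem simulate_congr (hV : DependsOnPast V) {y y' : Ordinal.{u} → T} {β : Ordinal.{u}}
    (h : ∀ α < β, y α = y' α) : ∀ α < β, simulate V reply y α = simulate V reply y' α := by
  intro α
  induction α using WellFoundedLT.induction with
  | _ α ih =>
    intro hα
    rw [simulate_apply reply hV, simulate_apply reply hV, h α hα,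
      hV _ _ α fun γ hγ => ih γ hγ (hγ.trans hα)]

end Simulation

section Transfer

variable {T : Type u}

open Classical in
noncomputable def replyOutside (W O : Set T) (t : T) : T :=
  if (O ∩ W).Nonempty then t else if h : O.Nonempty then h.some else t

variable {W O : Set T} {t : T}

theorem replyOutside_eq_of_mem (h : replyOutside W O t ∈ W) : replyOutside W O t = t := by
  unfold replyOutside at h ⊢
  split_ifs at h ⊢ with hmeet hO
  · rfl
  · exact absurd ⟨_, hO.some_mem, h⟩ hmeet
  · rfl

theorem replyOutside_mem (hO : O.Nonempty) (ht : (O ∩ W).Nonempty → t ∈ O) :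
    replyOutside W O t ∈ O := by
  unfold replyOutside
  split_ifs with hmeet
  · exact ht hmeet
  · exact hO.some_mem

variable [TopologicalSpace T]

theorem dense_playedSet_of_dense_trace {S : Set T} (hW : IsOpen W) (hSW : S ⊆ closure W)
    {x : Ordinal.{u} → S} {z : Ordinal.{u} → T} (hzx : ∀ α, z α ∈ W → z α = x α)
    {β : Ordinal.{u}} (hz : Dense (PlayedSet z β)) : Dense (PlayedSet x β) := by
  have trace : W ∩ PlayedSet z β ⊆ Subtype.val '' PlayedSet x β := by
    rintro _ ⟨hw, α, hα, rfl⟩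
    exact ⟨x α, ⟨α, hα, rfl⟩, (hzx α hw).symm⟩
  rw [Subtype.dense_iff]
  calc S ⊆ closure W := hSW
    _ ⊆ closure (closure (W ∩ PlayedSet z β)) := closure_mono (hz.open_subset_closure_inter hW)
    _ ⊆ closure (Subtype.val '' PlayedSet x β) := by
      rw [closure_closure]; exact closure_mono trace

theorem PlayerIWins.of_subset_closure_interior_closure {S : Set T}
    (hS : S ⊆ closure (interior (closure S))) {θ : Ordinal.{u}} (hT : PlayerIWins T θ) :
    PlayerIWins S θ := by
  classical
  obtain ⟨V, hV_open, hV_past, hV_wins⟩ := hT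
  set W := interior (closure S)
  let run (x : Ordinal.{u} → S) : Ordinal.{u} → T := simulate V (replyOutside W) fun α => x α
  have run_apply (x β) : run x β = replyOutside W (V (run x) β) (x β) :=
    simulate_apply _ hV_past _ β
  have run_dense {x β} : Dense (PlayedSet (run x) β) → Dense (PlayedSet x β) :=
    dense_playedSet_of_dense_trace isOpen_interior hS fun α hα => by
      rw [run_apply] at hα ⊢
      exact replyOutside_eq_of_mem hα
  refine ⟨fun x β => if (V (run x) β ∩ W).Nonempty then Subtype.val ⁻¹' (V (run x) β ∩ W)
    else univ, fun x β hnd => ?_, fun x x' β h => ?_, fun x hx => ?_⟩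
  · obtain ⟨hVo, -⟩ := hV_open _ β (mt run_dense hnd)
    beta_reduce
    split_ifs with hmeet
    · have hVW : IsOpen (V (run x) β ∩ W) := hVo.inter isOpen_interior
      obtain ⟨p, hpS, hp⟩ := (closure_inter_open_nonempty_iff hVW).mp <|
        hmeet.mono fun p hp => ⟨interior_subset hp.2, hp⟩
      exact ⟨hVW.preimage continuous_subtype_val, ⟨p, hpS⟩, hp⟩
    · exact ⟨isOpen_univ, @univ_nonempty _ (nonempty_of_not_dense hnd)⟩
  · beta_reduce
    rw [hV_past _ _ β (simulate_congr _ hV_past fun α hα => congrArg Subtype.val (h α hα))]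
  · by_contra! hnd
    refine (hV_wins (run x) fun β hβ hndT => ?_).elim fun β ⟨hβ, hd⟩ => hnd β hβ (run_dense hd)
    have hxβ := hx β hβ (hnd β hβ)
    beta_reduce at hxβ
    rw [run_apply]
    exact replyOutside_mem (hV_open _ β hndT).2 fun hmeet => by
      rw [if_pos hmeet] at hxβ; exact hxβ.1

end Transfer

/-- If `S ⊆ T` satisfies `closure (interior (closure S)) = closure S`
(e.g. `S` open or dense), then `gd(S) ≤ gd(T)`. -/
theorem stmt2 {T : Type u} [TopologicalSpace T] (S : Set T)
    (h : closure (interior (closure S)) = closure S) :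
    gd ↥S ≤ gd T := by
  obtain ⟨κ, hκ⟩ := exists_playerIWins_succ_ord T
  refine csInf_le_csInf' ⟨κ, hκ⟩ fun κ hκ => ⟨hκ.1, ?_⟩
  exact hκ.2.of_subset_closure_interior_closure (h.symm ▸ subset_closure)
end

section
/- Let X be a topological space and suppose {x_α : α < κ} ⊆ X is a dense family of points such that the tightness t(x_α, X) ≤ κ for every α < κ. Then δ(X) ≤ κ, i.e., every dense subset of X has density at most κ. -/
open Cardinal Set TopologicalSpace

universe u

theorem densityCard_le_mk {X : Type u} [TopologicalSpace X] {D : Set X} (hD : Dense D) :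
    densityCard X ≤ #D :=
  csInf_le' ⟨D, hD, rfl⟩

theorem densityCard_subtype_le_mk {X : Type u} [TopologicalSpace X] {D W : Set X}
    (hWD : W ⊆ D) (hW : Dense W) : densityCard D ≤ #W := by
  have hdense : Dense (Subtype.val ⁻¹' W : Set D) := by
    rw [Subtype.dense_iff, Subtype.image_preimage_coe, inter_eq_right.mpr hWD]
    exact fun x _ => hW x
  exact (densityCard_le_mk hdense).trans
    (mk_preimage_of_injective _ _ Subtype.val_injective)

/-- Each point of `S` lies in the closure of at most `κ` points of `D`; the union of these
`κ · κ` points is dense because its closure contains the dense set `S`. -/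
theorem exists_dense_subset_mk_le_of_tightness {X : Type u} [TopologicalSpace X]
    {κ : Cardinal.{u}} (hκ : ℵ₀ ≤ κ) {S : Set X} (hSdense : Dense S) (hScard : #S ≤ κ)
    (htight : ∀ x ∈ S, ∀ Y : Set X, x ∈ closure Y → ∃ Z ⊆ Y, #Z ≤ κ ∧ x ∈ closure Z)
    {D : Set X} (hD : Dense D) : ∃ W ⊆ D, Dense W ∧ #W ≤ κ := by
  choose! Z hZD hZcard hxZ using fun x hx => htight x hx D (hD.closure_eq ▸ mem_univ x)
  refine ⟨⋃ x ∈ S, Z x, iUnion₂_subset hZD, ?_, ?_⟩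
  · have hS : S ⊆ closure (⋃ x ∈ S, Z x) := fun x hx =>
      closure_mono (subset_biUnion_of_mem hx) (hxZ x hx)
    exact dense_closure.mp (hSdense.mono hS)
  · calc #(⋃ x ∈ S, Z x) ≤ #S * ⨆ x : S, #(Z x) := mk_biUnion_le Z S
      _ ≤ κ * κ := mul_le_mul' hScard (ciSup_le' fun x => hZcard x x.2)
      _ = κ := mul_eq_self hκ

/-- If `X` has a dense family of at most `κ` points each of tightness
at most `κ`, then `δ(X) ≤ κ`. -/
theorem stmt3 {X : Type u} [TopologicalSpace X] (κ : Cardinal.{u}) (hκ : ℵ₀ ≤ κ)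
    (S : Set X) (hSdense : Dense S) (hScard : #S ≤ κ)
    (htight : ∀ x ∈ S, ∀ Y : Set X, x ∈ closure Y →
      ∃ Z ⊆ Y, #Z ≤ κ ∧ x ∈ closure Z) :
    deltaCard X ≤ κ := by
  have : Nonempty {D : Set X // Dense D} := ⟨⟨univ, dense_univ⟩⟩
  refine ciSup_le' fun ⟨D, hD⟩ => ?_
  obtain ⟨W, hWD, hW, hWcard⟩ :=
    exists_dense_subset_mk_le_of_tightness hκ hSdense hScard htight hD
  exact (densityCard_subtype_le_mk hWD hW).trans hWcard
end

section
/- If Player I wins a run of the open-point game on X that has order type (length) θ, then cf(θ) ≤ δ(X). Concretely: if {x_α : α < θ} is a transfinite sequence in X whose closure is X but such that {x_α : α < β} is not dense for any β < θ, then cf(θ) ≤ δ(X). -/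
open Cardinal Set TopologicalSpace

universe u

/-- If a run of the open-point game on `X` won by Player I has order
type `θ` — i.e. `{x_α : α < θ}` is dense but no proper initial segment is — then
`cf(θ) ≤ δ(X)`. -/
theorem stmt4 {X : Type u} [TopologicalSpace X] (θ : Ordinal.{u}) (x : Ordinal.{u} → X)
    (hdense : Dense (PlayedSet x θ))
    (hproper : ∀ β < θ, ¬ Dense (PlayedSet x β)) :
    θ.cof ≤ deltaCard X := by
  set A : Set X := PlayedSet x θ with hA
  -- pick a dense subset D of the subspace A of minimal cardinality
  have hne : {c | ∃ D : Set ↥A, Dense D ∧ #D = c}.Nonempty :=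
    ⟨#(Set.univ : Set ↥A), Set.univ, dense_univ, rfl⟩
  obtain ⟨D, hD, hDcard⟩ := csInf_mem hne
  have hDcard' : #D = densityCard ↥A := hDcard
  -- image of D in X is dense
  set D' : Set X := Subtype.val '' D with hD'
  have hD'dense : Dense D' := (hdense.denseRange_val).dense_image continuous_subtype_val hD
  have hD'A : D' ⊆ A := by rintro _ ⟨⟨a, ha⟩, _, rfl⟩; exact ha
  -- choose for each d ∈ D' an ordinal α < θ with x α = d
  have hchoice : ∀ d : ↥D', ∃ α, α < θ ∧ x α = d.1 := by
    rintro ⟨d, hd⟩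
    obtain ⟨α, hα, hxα⟩ := hD'A hd
    exact ⟨α, hα, hxα⟩
  choose f hflt hfx using hchoice
  -- cof θ ≤ #D'
  have hθ : θ = Ordinal.lsub f := by
    apply le_antisymm
    · refine le_of_forall_lt fun β hβ => ?_
      rw [Ordinal.lt_lsub_iff]
      by_contra h
      push_neg at h
      apply hproper β hβ
      refine Dense.mono ?_ hD'dense
      intro d hd
      exact ⟨f ⟨d, hd⟩, lt_of_not_ge (fun hle => absurd hle (not_le_of_gt (h ⟨d, hd⟩))),
        hfx ⟨d, hd⟩⟩
    · exact Ordinal.lsub_le fun i => hflt i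
  have h1 : θ.cof ≤ #D' := by rw [hθ]; exact Ordinal.cof_lsub_le f
  have h2 : #D' = #D := Cardinal.mk_image_eq Subtype.val_injective
  -- densityCard A ≤ deltaCard X
  have h3 : densityCard ↥A ≤ deltaCard X := by
    have := le_ciSup (Cardinal.bddAbove_range
      (fun D : {D : Set X // Dense D} => densityCard ↥(D.1))) (⟨A, hdense⟩ : {D : Set X // Dense D})
    exact this
  calc θ.cof ≤ #D' := h1
    _ = #D := h2
    _ = densityCard ↥A := hDcard'
    _ ≤ deltaCard X := h3
end

section
/- If {x_α : α < θ} is a transfinite sequence dense in a topological space X such that no proper initial segment {x_α : α < β}, β < θ, is dense in X, then the subspace D = {x_α : α < θ} has density d(D) ≥ cf(θ). -/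
open Cardinal Set TopologicalSpace

universe u

/-- If `{x_α : α < θ}` is dense in `X` but no proper initial segment is
dense, then the subspace `D = {x_α : α < θ}` has density at least `cf(θ)`. -/
theorem stmt5 {X : Type u} [TopologicalSpace X] (θ : Ordinal.{u}) (x : Ordinal.{u} → X)
    (hdense : Dense (PlayedSet x θ))
    (hproper : ∀ β < θ, ¬ Dense (PlayedSet x β)) :
    θ.cof ≤ densityCard ↥(PlayedSet x θ) := by
  set D := PlayedSet x θ with hD
  by_contra h
  push_neg at h
  -- obtain a dense subset of D of minimal cardinality
  have hne : {c | ∃ E : Set ↥D, Dense E ∧ #E = c}.Nonempty :=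
    ⟨#(univ : Set ↥D), univ, dense_univ, rfl⟩
  obtain ⟨E, hEdense, hEcard⟩ := csInf_mem hne
  rw [show sInf {c | ∃ E : Set ↥D, Dense E ∧ #E = c} = densityCard ↥D from rfl] at hEcard
  -- the image of E in X is dense in X
  have hsub : D ⊆ closure (Subtype.val '' E) := fun d hd =>
    closure_subtype.mp (hEdense ⟨d, hd⟩)
  have hEX : Dense (Subtype.val '' E) :=
    dense_closure.mp (hdense.mono hsub)
  -- choose indices
  have hidx : ∀ e : ↥E, ∃ α, α < θ ∧ x α = (e : ↥D).1 := by
    intro e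
    obtain ⟨α, hα, hxa⟩ := (e : ↥D).2
    exact ⟨α, hα, hxa⟩
  choose f hf hxf using hidx
  have hcard : #↥E < θ.cof := hEcard ▸ h
  have hβ : Ordinal.lsub f < θ := Ordinal.lsub_lt_ord hcard hf
  apply hproper _ hβ
  have himg : Subtype.val '' E ⊆ PlayedSet x (Ordinal.lsub f) := by
    rintro p ⟨e, he, rfl⟩
    exact ⟨f ⟨e, he⟩, Ordinal.lt_lsub f ⟨e, he⟩, hxf ⟨e, he⟩⟩
  exact hEX.mono himg
end

section
/- Let κ be an uncountable cardinal. Let X be the disjoint union of κ and ω topologized by the base {V ∪ U : V ∈ 𝒱, U ∈ 𝒰}, where 𝒱 is an ultrafilter on κ extending the filter of co-<κ sets and 𝒰 is a free ultrafilter on ω. Then X is a T₁ space in which every dense subset of cardinality < κ is separable. -/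
/-!
The basic open sets `inl '' V ∪ inr '' U` are exactly the members of the filter
`𝒱.map inl ⊔ 𝒰.map inr`, and a set is dense in the topology generated by the members of a
proper filter iff it is frequent in that filter. Here that means: frequent in `𝒱` on the `κ`
side or frequent in `𝒰` on the `ω` side. A set of size `< κ` has a complement in `𝒱` on the
`κ` side, so a dense `D` of size `< κ` is frequent in `𝒰` through its countable part
`D ∩ ω`, which is therefore already dense. Complements of points lie in both ultrafilters,
which gives `T₁`.
-/

open Cardinal Set TopologicalSpace

universe u

open Filter

namespace Filter

section GenerateFromSets

variable {X : Type*} [t : TopologicalSpace X] {F : Filter X}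

theorem isTopologicalBasis_sets (ht : t = generateFrom F.sets) : IsTopologicalBasis F.sets := by
  refine ⟨fun s hs s' hs' x hx => ⟨s ∩ s', inter_mem hs hs', hx, subset_rfl⟩, ?_, ht⟩
  exact sUnion_eq_univ_iff.2 fun x => ⟨univ, univ_mem, mem_univ x⟩

theorem t1Space_of_generateFrom_sets (ht : t = generateFrom F.sets) (hF : F ≤ cofinite) :
    T1Space X where
  t1 x := by
    rw [← isOpen_compl_iff, ht]
    exact isOpen_generateFrom_of_mem (le_cofinite_iff_compl_singleton_mem.1 hF x)

theorem dense_iff_frequently_of_generateFrom_sets [F.NeBot] (ht : t = generateFrom F.sets)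
    {D : Set X} : Dense D ↔ ∃ᶠ x in F, x ∈ D := by
  rw [(isTopologicalBasis_sets ht).dense_iff, frequently_iff]
  exact ⟨fun h s hs => h s hs (nonempty_of_mem hs), fun h s hs _ => h hs⟩

end GenerateFromSets

section Sum

variable {α β : Type*}

theorem sets_map_inl_sup_map_inr (f : Filter α) (g : Filter β) :
    (f.map Sum.inl ⊔ g.map Sum.inr).sets =
      {s | ∃ V ∈ f, ∃ U ∈ g, s = Sum.inl '' V ∪ Sum.inr '' U} := by
  ext s
  constructor
  · intro hs
    exact ⟨_, (mem_sup.1 hs).1, _, (mem_sup.1 hs).2,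
      (image_preimage_inl_union_image_preimage_inr s).symm⟩
  · rintro ⟨V, hV, U, hU, rfl⟩
    simpa [mem_sup, preimage_image_eq _ Sum.inl_injective,
      preimage_image_eq _ Sum.inr_injective] using ⟨hV, hU⟩

theorem dense_image_inr_preimage_of_eventually_notMem [t : TopologicalSpace (α ⊕ β)]
    {f : Filter α} {g : Filter β} [f.NeBot]
    (ht : t = generateFrom (f.map Sum.inl ⊔ g.map Sum.inr).sets) {D : Set (α ⊕ β)}
    (hD : Dense D) (hl : ∀ᶠ a in f, Sum.inl a ∉ D) :
    Dense (Sum.inr '' (Sum.inr ⁻¹' D) : Set (α ⊕ β)) := by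
  rw [dense_iff_frequently_of_generateFrom_sets ht, frequently_sup, frequently_map,
    frequently_map] at hD ⊢
  right
  simpa [Sum.inr_injective.mem_set_image] using hD.resolve_left (not_frequently.2 hl)

end Sum

end Filter

/-- With `X = κ ⊔ ω` topologized by the base `{V ∪ U : V ∈ 𝒱, U ∈ 𝒰}`,
where `𝒱` is an ultrafilter on `κ` extending the co-`<κ` filter and `𝒰` a free
ultrafilter on `ω`, the space `X` is `T₁` and every dense subset of cardinality `< κ`
contains a countable subset dense in `X` (in particular it is separable). -/
theorem stmt9 (κ : Cardinal.{u}) (hκ : ℵ₀ < κ)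
    (𝒱 : Ultrafilter κ.ord.ToType)
    (h𝒱 : ∀ s : Set κ.ord.ToType, #↥(sᶜ) < κ → s ∈ 𝒱)
    (𝒰 : Ultrafilter ℕ) (h𝒰 : (𝒰 : Filter ℕ) ≤ Filter.cofinite)
    [t : TopologicalSpace (κ.ord.ToType ⊕ ℕ)]
    (ht : t = TopologicalSpace.generateFrom
      {s | ∃ V ∈ 𝒱, ∃ U ∈ 𝒰, s = Sum.inl '' V ∪ Sum.inr '' U}) :
    T1Space (κ.ord.ToType ⊕ ℕ) ∧
      ∀ D : Set (κ.ord.ToType ⊕ ℕ), Dense D → #D < κ →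
        ∃ C ⊆ D, C.Countable ∧ Dense C := by
  replace ht : t = generateFrom ((𝒱 : Filter _).map Sum.inl ⊔ (𝒰 : Filter ℕ).map Sum.inr).sets :=
    ht.trans (congrArg generateFrom
      (sets_map_inl_sup_map_inr (𝒱 : Filter κ.ord.ToType) (𝒰 : Filter ℕ)).symm)
  have h𝒱_le : (𝒱 : Filter κ.ord.ToType) ≤ cofinite :=
    le_cofinite_iff_compl_singleton_mem.2 fun a => h𝒱 _ (by simpa using one_lt_aleph0.trans hκ)
  refine ⟨t1Space_of_generateFrom_sets ht (sup_le (Sum.inl_injective.tendsto_cofinite.comp h𝒱_le)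
    (Sum.inr_injective.tendsto_cofinite.comp h𝒰)), fun D hD hDκ => ?_⟩
  have hl : ∀ᶠ a in (𝒱 : Filter κ.ord.ToType), Sum.inl a ∉ D :=
    h𝒱 (Sum.inl ⁻¹' D)ᶜ <| by
      rw [compl_compl]
      exact (mk_preimage_of_injective _ D Sum.inl_injective).trans_lt hDκ
  exact ⟨_, image_preimage_subset _ _, (Sum.inr ⁻¹' D).to_countable.image _,
    dense_image_inr_preimage_of_eventually_notMem ht hD hl⟩
end

section
/- In the space X of the ultrafilter construction (X = κ ⊔ ω with base {V ∪ U : V ∈ 𝒱, U ∈ 𝒰}, 𝒱 an ultrafilter on κ extending the co-<κ filter, 𝒰 a free ultrafilter on ω), no subset I ⊆ κ with |I| < κ is dense in X. Consequently X has a dense subset (namely κ itself) of density κ, so δ(X) = κ. -/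
open Cardinal Set TopologicalSpace

universe u

/- The sets `inl '' V ∪ inr '' U` are closed under intersection, so they form a base,
and `inl '' I` is dense exactly when `I` meets every member of `𝒱`, i.e. when `I ∈ 𝒱`. A set of
size `< κ` has its complement in `𝒱`, so it is not dense; hence every dense subset of the dense
set `range inl` has size `≥ κ`, while `δ(X) ≤ |X| = κ` trivially. -/

section Density

variable {X : Type u} [TopologicalSpace X]

theorem densityCard_le_mk_s10 : densityCard X ≤ #X :=
  csInf_le' ⟨univ, dense_univ, mk_univ⟩

theorem le_densityCard {c : Cardinal.{u}} (h : ∀ D : Set X, Dense D → c ≤ #D) :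
    c ≤ densityCard X :=
  le_csInf ⟨_, univ, dense_univ, rfl⟩ (by rintro _ ⟨D, hD, rfl⟩; exact h D hD)

theorem le_densityCard_of_dense {Y : Set X} (hY : Dense Y) {c : Cardinal.{u}}
    (h : ∀ D ⊆ Y, Dense D → c ≤ #D) : c ≤ densityCard Y :=
  le_densityCard fun E hE =>
    (h _ (Subtype.coe_image_subset Y E)
      (hY.denseRange_val.dense_image continuous_subtype_val hE)).trans mk_image_le

theorem deltaCard_le_mk : deltaCard X ≤ #X :=
  ciSup_le' fun D => densityCard_le_mk_s10.trans (mk_set_le D.1)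

theorem densityCard_le_deltaCard {Y : Set X} (hY : Dense Y) : densityCard Y ≤ deltaCard X :=
  le_ciSup bddAbove_of_small (⟨Y, hY⟩ : {D : Set X // Dense D})

end Density

section SumFilterBasis

variable {α β : Type*}

def sumFilterBasis (f : Filter α) (g : Filter β) : Set (Set (α ⊕ β)) :=
  {s | ∃ V ∈ f, ∃ U ∈ g, s = Sum.inl '' V ∪ Sum.inr '' U}

theorem inter_image_inl_union_image_inr (V₁ V₂ : Set α) (U₁ U₂ : Set β) :
    (Sum.inl '' V₁ ∪ Sum.inr '' U₁) ∩ (Sum.inl '' V₂ ∪ Sum.inr '' U₂) =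
      Sum.inl '' (V₁ ∩ V₂) ∪ Sum.inr '' (U₁ ∩ U₂) := by
  ext (a | b) <;> simp

theorem finiteInter_sumFilterBasis (f : Filter α) (g : Filter β) :
    FiniteInter (sumFilterBasis f g) where
  univ_mem := ⟨univ, Filter.univ_mem, univ, Filter.univ_mem, by simp⟩
  inter_mem := by
    rintro _ ⟨V₁, hV₁, U₁, hU₁, rfl⟩ _ ⟨V₂, hV₂, U₂, hU₂, rfl⟩
    exact ⟨_, Filter.inter_mem hV₁ hV₂, _, Filter.inter_mem hU₁ hU₂,
      inter_image_inl_union_image_inr V₁ V₂ U₁ U₂⟩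

variable {f : Filter α} {g : Filter β} [t : TopologicalSpace (α ⊕ β)]

theorem dense_image_inl_iff_frequently (ht : t = generateFrom (sumFilterBasis f g))
    [Nonempty β] (I : Set α) : Dense (Sum.inl '' I : Set (α ⊕ β)) ↔ ∃ᶠ a in f, a ∈ I := by
  rw [(isTopologicalBasis_of_subbasis_of_finiteInter ht
    (finiteInter_sumFilterBasis f g)).dense_iff, Filter.frequently_iff]
  constructor
  · intro h V hV
    obtain ⟨_, ⟨⟨a, haV, rfl⟩ | ⟨b, -, rfl⟩, ⟨a', haI, ha'⟩⟩⟩ :=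
      h _ ⟨V, hV, univ, Filter.univ_mem, rfl⟩ ⟨Sum.inr (Classical.arbitrary β), by simp⟩
    · exact ⟨a, haV, Sum.inl_injective ha' ▸ haI⟩
    · exact absurd ha' Sum.inl_ne_inr
  · rintro h _ ⟨V, hV, U, -, rfl⟩ -
    obtain ⟨a, haV, haI⟩ := h hV
    exact ⟨Sum.inl a, Or.inl ⟨a, haV, rfl⟩, a, haI, rfl⟩

theorem dense_image_inl_iff_mem {𝒱 : Ultrafilter α}
    (ht : t = generateFrom (sumFilterBasis 𝒱 g)) [Nonempty β] (I : Set α) :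
    Dense (Sum.inl '' I : Set (α ⊕ β)) ↔ I ∈ 𝒱 :=
  (dense_image_inl_iff_frequently ht I).trans Ultrafilter.frequently_iff_eventually

end SumFilterBasis

theorem stmt10_general (κ : Cardinal.{u}) (hκ : ℵ₀ < κ)
    (𝒱 : Ultrafilter κ.ord.ToType)
    (h𝒱 : ∀ s : Set κ.ord.ToType, #↥(sᶜ) < κ → s ∈ 𝒱)
    (𝒰 : Ultrafilter ℕ)
    [t : TopologicalSpace (κ.ord.ToType ⊕ ℕ)]
    (ht : t = TopologicalSpace.generateFrom
      {s | ∃ V ∈ 𝒱, ∃ U ∈ 𝒰, s = Sum.inl '' V ∪ Sum.inr '' U}) :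
    (∀ I : Set κ.ord.ToType, #I < κ → ¬ Dense (Sum.inl '' I : Set (κ.ord.ToType ⊕ ℕ))) ∧
      Dense (Set.range (Sum.inl : κ.ord.ToType → κ.ord.ToType ⊕ ℕ)) ∧
      deltaCard (κ.ord.ToType ⊕ ℕ) = κ := by
  have hdense := dense_image_inl_iff_mem (g := (𝒰 : Filter ℕ)) ht
  have small_not_dense (I : Set κ.ord.ToType) (hI : #I < κ) :
      ¬ Dense (Sum.inl '' I : Set (κ.ord.ToType ⊕ ℕ)) := by
    rw [hdense]
    exact Ultrafilter.compl_mem_iff_notMem.mp (h𝒱 _ (by rwa [compl_compl]))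
  have range_dense : Dense (range (Sum.inl : κ.ord.ToType → κ.ord.ToType ⊕ ℕ)) := by
    simpa only [image_univ] using (hdense univ).mpr Filter.univ_mem
  refine ⟨small_not_dense, range_dense, le_antisymm ?_ ?_⟩
  · calc deltaCard (κ.ord.ToType ⊕ ℕ) ≤ #(κ.ord.ToType ⊕ ℕ) := deltaCard_le_mk
      _ = κ := by simpa using add_eq_left hκ.le hκ.le
  · refine (le_densityCard_of_dense range_dense fun D hDinl hD => ?_).trans
      (densityCard_le_deltaCard range_dense)
    rw [← image_preimage_eq_of_subset hDinl] at hD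
    exact (not_lt.mp fun hlt => small_not_dense _ hlt hD).trans
      (mk_preimage_of_injective _ _ Sum.inl_injective)

/-- In the ultrafilter space `X = κ ⊔ ω`, no subset of the `κ`-part of
cardinality `< κ` is dense; the `κ`-part itself is dense, and `δ(X) = κ`. -/
theorem stmt10 (κ : Cardinal.{u}) (hκ : ℵ₀ < κ)
    (𝒱 : Ultrafilter κ.ord.ToType)
    (h𝒱 : ∀ s : Set κ.ord.ToType, #↥(sᶜ) < κ → s ∈ 𝒱)
    (𝒰 : Ultrafilter ℕ) (h𝒰 : (𝒰 : Filter ℕ) ≤ Filter.cofinite)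
    [t : TopologicalSpace (κ.ord.ToType ⊕ ℕ)]
    (ht : t = TopologicalSpace.generateFrom
      {s | ∃ V ∈ 𝒱, ∃ U ∈ 𝒰, s = Sum.inl '' V ∪ Sum.inr '' U}) :
    (∀ I : Set κ.ord.ToType, #I < κ → ¬ Dense (Sum.inl '' I : Set (κ.ord.ToType ⊕ ℕ))) ∧
      Dense (Set.range (Sum.inl : κ.ord.ToType → κ.ord.ToType ⊕ ℕ)) ∧
      deltaCard (κ.ord.ToType ⊕ ℕ) = κ :=
  stmt10_general κ hκ 𝒱 h𝒱 𝒰 (t := t) ht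
end

section
/- Let κ and μ be cardinals with μ measurable, and suppose 𝒱 is a μ-complete free ultrafilter on κ extending the co-<κ filter. In the space X = κ ⊔ ω with base {V ∪ U : V ∈ 𝒱, U ∈ 𝒰} (𝒰 a free ultrafilter on ω), the intersection of fewer than μ-many dense non-separable subsets of X is itself dense in X. -/
open Cardinal Set TopologicalSpace

universe u

/-! A dense set `A` of `κ ⊔ ω` meets the basic open set built from the complements of its two
traces, so one of its traces is large. If the trace on `ω` is in `𝒰`, that countable trace is
already dense, so `A` is separable; hence for non-separable dense sets the trace on `κ` is in `𝒱`.
By `μ`-completeness of `𝒱` the traces of fewer than `μ` such sets still meet in a member of `𝒱`,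
and any set whose trace on `κ` is in `𝒱` meets every basic open set. -/

theorem separableSpace_of_countable_dense_subset {X : Type*} [TopologicalSpace X]
    {s t : Set X} (hts : t ⊆ s) (htc : t.Countable) (ht : Dense t) : SeparableSpace s := by
  lift t to Set s using hts
  exact ⟨⟨t, countable_of_injective_of_countable_image Subtype.val_injective.injOn htc,
    Subtype.dense_iff.2 fun x _ => ht.closure_eq ▸ mem_univ x⟩⟩

theorem iInter_mem_of_sInter_mem_of_mk_lt {α ι : Type u} {f : Filter α} {μ : Cardinal.{u}}
    (hf : ∀ s : Set (Set α), #s < μ → (∀ v ∈ s, v ∈ f) → ⋂₀ s ∈ f) (hι : #ι < μ)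
    {A : ι → Set α} (hA : ∀ i, A i ∈ f) : ⋂ i, A i ∈ f := by
  rw [← sInter_range]
  exact hf _ (mk_range_le.trans_lt hι) (forall_mem_range.2 hA)

section UltrafilterSum

variable {α β : Type*} (𝒱 : Ultrafilter α) (𝒰 : Ultrafilter β)

def ultrafilterSumBasis : Set (Set (α ⊕ β)) :=
  {s | ∃ V ∈ 𝒱, ∃ U ∈ 𝒰, s = Sum.inl '' V ∪ Sum.inr '' U}

variable {𝒱 𝒰}

theorem univ_mem_ultrafilterSumBasis : Set.univ ∈ ultrafilterSumBasis 𝒱 𝒰 :=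
  ⟨univ, Filter.univ_mem, univ, Filter.univ_mem, by simp⟩

theorem nonempty_of_mem_ultrafilterSumBasis {s : Set (α ⊕ β)}
    (hs : s ∈ ultrafilterSumBasis 𝒱 𝒰) : s.Nonempty := by
  obtain ⟨V, hV, U, -, rfl⟩ := hs
  exact ((𝒱.nonempty_of_mem hV).image _).mono subset_union_left

theorem inter_mem_ultrafilterSumBasis {s s' : Set (α ⊕ β)} (hs : s ∈ ultrafilterSumBasis 𝒱 𝒰)
    (hs' : s' ∈ ultrafilterSumBasis 𝒱 𝒰) : s ∩ s' ∈ ultrafilterSumBasis 𝒱 𝒰 := by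
  obtain ⟨V, hV, U, hU, rfl⟩ := hs
  obtain ⟨V', hV', U', hU', rfl⟩ := hs'
  refine ⟨V ∩ V', 𝒱.inter_mem hV hV', U ∩ U', 𝒰.inter_mem hU hU', ?_⟩
  ext (x | x) <;> simp

theorem isTopologicalBasis_ultrafilterSumBasis [t : TopologicalSpace (α ⊕ β)]
    (ht : t = generateFrom (ultrafilterSumBasis 𝒱 𝒰)) :
    IsTopologicalBasis (ultrafilterSumBasis 𝒱 𝒰) := by
  rw [← insert_eq_of_mem univ_mem_ultrafilterSumBasis]
  exact isTopologicalBasis_of_subbasis_of_inter ht fun _ hs _ hs' =>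
    inter_mem_ultrafilterSumBasis hs hs'

variable [TopologicalSpace (α ⊕ β)] (hB : IsTopologicalBasis (ultrafilterSumBasis 𝒱 𝒰))
include hB

theorem dense_of_preimage_inl_mem {D : Set (α ⊕ β)} (hD : Sum.inl ⁻¹' D ∈ 𝒱) : Dense D := by
  refine hB.dense_iff.2 fun o ho _ => ?_
  obtain ⟨V, hV, U, -, rfl⟩ := ho
  obtain ⟨a, haV, haD⟩ := 𝒱.nonempty_of_mem (𝒱.inter_mem hV hD)
  exact ⟨Sum.inl a, Or.inl (mem_image_of_mem _ haV), haD⟩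

theorem dense_of_preimage_inr_mem {D : Set (α ⊕ β)} (hD : Sum.inr ⁻¹' D ∈ 𝒰) : Dense D := by
  refine hB.dense_iff.2 fun o ho _ => ?_
  obtain ⟨V, -, U, hU, rfl⟩ := ho
  obtain ⟨b, hbU, hbD⟩ := 𝒰.nonempty_of_mem (𝒰.inter_mem hU hD)
  exact ⟨Sum.inr b, Or.inr (mem_image_of_mem _ hbU), hbD⟩

theorem Dense.preimage_inl_mem_or_preimage_inr_mem {D : Set (α ⊕ β)} (hD : Dense D) :
    Sum.inl ⁻¹' D ∈ 𝒱 ∨ Sum.inr ⁻¹' D ∈ 𝒰 := by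
  by_contra! h
  obtain ⟨hV, hU⟩ := h
  have hbasic : Sum.inl '' (Sum.inl ⁻¹' D)ᶜ ∪ Sum.inr '' (Sum.inr ⁻¹' D)ᶜ ∈
      ultrafilterSumBasis 𝒱 𝒰 :=
    ⟨_, 𝒱.compl_mem_iff_notMem.2 hV, _, 𝒰.compl_mem_iff_notMem.2 hU, rfl⟩
  obtain ⟨x, hx, hxD⟩ := hD.inter_open_nonempty _ (hB.isOpen hbasic)
    (nonempty_of_mem_ultrafilterSumBasis hbasic)
  rcases hx with ⟨a, ha, rfl⟩ | ⟨b, hb, rfl⟩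
  exacts [ha hxD, hb hxD]

theorem preimage_inl_mem_of_dense_of_not_separableSpace [Countable β] {D : Set (α ⊕ β)}
    (hD : Dense D) (hsep : ¬SeparableSpace D) : Sum.inl ⁻¹' D ∈ 𝒱 := by
  refine (hD.preimage_inl_mem_or_preimage_inr_mem hB).resolve_right fun hU => hsep ?_
  have htrace : Sum.inr ⁻¹' (D ∩ range Sum.inr) = Sum.inr ⁻¹' D := by simp
  exact separableSpace_of_countable_dense_subset inter_subset_left
    ((countable_range _).mono inter_subset_right)
    (dense_of_preimage_inr_mem hB (htrace ▸ hU))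

end UltrafilterSum

theorem stmt11_general (κ μ : Cardinal.{u})
    (𝒱 : Ultrafilter κ.ord.ToType)
    (h𝒱compl : ∀ s : Set (Set κ.ord.ToType), #s < μ → (∀ v ∈ s, v ∈ 𝒱) → ⋂₀ s ∈ 𝒱)
    (𝒰 : Ultrafilter ℕ)
    [t : TopologicalSpace (κ.ord.ToType ⊕ ℕ)]
    (ht : t = TopologicalSpace.generateFrom
      {s | ∃ V ∈ 𝒱, ∃ U ∈ 𝒰, s = Sum.inl '' V ∪ Sum.inr '' U})
    (ι : Type u) (hι : #ι < μ) (A : ι → Set (κ.ord.ToType ⊕ ℕ))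
    (hdense : ∀ i, Dense (A i))
    (hnonsep : ∀ i, ¬ SeparableSpace ↥(A i)) :
    Dense (⋂ i, A i) := by
  have hB := isTopologicalBasis_ultrafilterSumBasis ht
  refine dense_of_preimage_inl_mem hB ?_
  rw [preimage_iInter]
  exact iInter_mem_of_sInter_mem_of_mk_lt h𝒱compl hι fun i =>
    preimage_inl_mem_of_dense_of_not_separableSpace hB (hdense i) (hnonsep i)

/-- Suppose `μ` is measurable (there is a `μ`-complete free ultrafilter
on `μ`, `μ` uncountable) and `𝒱` is a `μ`-complete free ultrafilter on `κ` extending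
the co-`<κ` filter. In the space `X = κ ⊔ ω` with base `{V ∪ U : V ∈ 𝒱, U ∈ 𝒰}`,
the intersection of fewer than `μ`-many dense non-separable subsets is dense. -/
theorem stmt11 (κ μ : Cardinal.{u}) (hκ : ℵ₀ < κ)
    (hμmeas : ℵ₀ < μ ∧ ∃ W : Ultrafilter μ.ord.ToType,
      (∀ x, (W : Filter μ.ord.ToType) ≠ pure x) ∧
      ∀ s : Set (Set μ.ord.ToType), #s < μ → (∀ v ∈ s, v ∈ W) → ⋂₀ s ∈ W)
    (𝒱 : Ultrafilter κ.ord.ToType)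
    (h𝒱 : ∀ s : Set κ.ord.ToType, #↥(sᶜ) < κ → s ∈ 𝒱)
    (h𝒱compl : ∀ s : Set (Set κ.ord.ToType), #s < μ → (∀ v ∈ s, v ∈ 𝒱) → ⋂₀ s ∈ 𝒱)
    (𝒰 : Ultrafilter ℕ) (h𝒰 : (𝒰 : Filter ℕ) ≤ Filter.cofinite)
    [t : TopologicalSpace (κ.ord.ToType ⊕ ℕ)]
    (ht : t = TopologicalSpace.generateFrom
      {s | ∃ V ∈ 𝒱, ∃ U ∈ 𝒰, s = Sum.inl '' V ∪ Sum.inr '' U})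
    (ι : Type u) (hι : #ι < μ) (A : ι → Set (κ.ord.ToType ⊕ ℕ))
    (hdense : ∀ i, Dense (A i))
    (hnonsep : ∀ i, ¬ SeparableSpace ↥(A i)) :
    Dense (⋂ i, A i) :=
  stmt11_general κ μ 𝒱 h𝒱compl 𝒰 (t := t) ht ι hι A hdense hnonsep
end

section
/- Let X be a Banach space. If the dual space X* equipped with the weak-star topology is dense-separable (every weak-star dense subset of X* is weak-star separable), then X has the Countable Separation Property: every subset F ⊆ X* that separates the points of X contains a countable subset F₀ that separates the points of X. -/
open Cardinal Set TopologicalSpace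

universe u

/-! The span of a point-separating family `F ⊆ X*` is weak-star dense: a weak-star continuous
functional vanishing on it is evaluation at a point annihilated by `F`, hence is zero, and the
Hahn–Banach separation theorem does the rest. Dense-separability gives a countable dense subset of
this span; its elements involve only countably many members of `F`, whose span is then still
weak-star dense, and a family with dense span separates points since `X*` does. -/

theorem Submodule.dense_of_forall_dual_eq_zero {E : Type*} [AddCommGroup E] [Module ℝ E]
    [TopologicalSpace E] [IsTopologicalAddGroup E] [ContinuousSMul ℝ E] [LocallyConvexSpace ℝ E]
    (p : Submodule ℝ E) (hp : ∀ φ : StrongDual ℝ E, (∀ x ∈ p, φ x = 0) → φ = 0) :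
    Dense (p : Set E) := by
  by_contra hdense
  obtain ⟨g, hg⟩ := not_forall.mp hdense
  obtain ⟨φ, u, hφg, hφp⟩ := geometric_hahn_banach_point_closed p.convex.closure isClosed_closure hg
  have hu : u < 0 := by simpa using hφp 0 (subset_closure p.zero_mem)
  have hφ : ∀ x ∈ p, φ x = 0 := by
    intro x hx
    by_contra hx0
    have := hφp ((u / φ x) • x) (subset_closure (p.smul_mem _ hx))
    rw [map_smul, smul_eq_mul, div_mul_cancel₀ _ hx0] at this
    exact lt_irrefl _ this
  rw [hp φ hφ] at hφg
  exact (hu.trans hφg).false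

theorem Submodule.exists_countable_subset_span_subset_closure {R V : Type*} [Semiring R]
    [AddCommMonoid V] [Module R V] [TopologicalSpace V] (S : Set V)
    [SeparableSpace (Submodule.span R S)] :
    ∃ S₀ ⊆ S, S₀.Countable ∧ (Submodule.span R S : Set V) ⊆ closure (Submodule.span R S₀) := by
  obtain ⟨t, htc, htd⟩ := exists_countable_dense (Submodule.span R S)
  choose! σ hσS hσspan using fun (c : Submodule.span R S) (_ : c ∈ t) =>
    Submodule.mem_span_finite_of_mem_span c.2
  refine ⟨⋃ c ∈ t, σ c, iUnion₂_subset hσS, htc.biUnion fun c _ => (σ c).countable_toSet, ?_⟩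
  have hts : Subtype.val '' t ⊆ Submodule.span R (⋃ c ∈ t, (σ c : Set V)) := by
    rintro _ ⟨c, hc, rfl⟩
    exact Submodule.span_mono (subset_biUnion_of_mem (u := fun c => (σ c : Set V)) hc)
      (hσspan c hc)
  intro x hx
  have : (⟨x, hx⟩ : Submodule.span R S) ∈ closure t := htd.closure_eq ▸ mem_univ _
  exact closure_mono hts (mem_closure_image continuous_subtype_val.continuousAt this)

namespace WeakDual

section NontriviallyNormedField

variable {𝕜 X : Type*} [NontriviallyNormedField 𝕜] [AddCommGroup X] [TopologicalSpace X]
  [Module 𝕜 X]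

theorem exists_eq_eval (φ : StrongDual 𝕜 (WeakDual 𝕜 X)) :
    ∃ x : X, ∀ f : WeakDual 𝕜 X, φ f = f x := by
  obtain ⟨x, rfl⟩ := LinearMap.dualEmbedding_surjective (topDualPairing 𝕜 X) φ
  exact ⟨x, fun _ => rfl⟩

theorem exists_mem_apply_ne_zero_of_dense_span [SeparatingDual 𝕜 X] {F : Set (WeakDual 𝕜 X)}
    (hF : Dense (Submodule.span 𝕜 F : Set (WeakDual 𝕜 X))) {x : X} (hx : x ≠ 0) :
    ∃ f ∈ F, f x ≠ 0 := by
  by_contra! hFx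
  have hker : (Submodule.span 𝕜 F : Set (WeakDual 𝕜 X)) ⊆ {f | f x = 0} :=
    Submodule.span_le (p := LinearMap.ker ((topDualPairing 𝕜 X).flip x)).mpr hFx
  have hall : ∀ f : WeakDual 𝕜 X, f x = 0 := fun f =>
    (isClosed_eq (eval_continuous x) continuous_const).closure_subset_iff.mpr hker (hF f)
  obtain ⟨g, hg⟩ := SeparatingDual.exists_ne_zero (R := 𝕜) hx
  exact hg (hall (StrongDual.toWeakDual g))

end NontriviallyNormedField

section Real

variable {X : Type*} [AddCommGroup X] [TopologicalSpace X] [Module ℝ X]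

instance instLocallyConvexSpace : LocallyConvexSpace ℝ (WeakDual ℝ X) :=
  inferInstanceAs (LocallyConvexSpace ℝ (WeakBilin (topDualPairing ℝ X)))

theorem dense_span_of_separating {F : Set (WeakDual ℝ X)}
    (hF : ∀ x : X, x ≠ 0 → ∃ f ∈ F, f x ≠ 0) :
    Dense (Submodule.span ℝ F : Set (WeakDual ℝ X)) := by
  refine Submodule.dense_of_forall_dual_eq_zero _ fun φ hφ => ?_
  obtain ⟨x, hφx⟩ := exists_eq_eval φ
  have hx : x = 0 := by
    by_contra hx
    obtain ⟨f, hf, hfx⟩ := hF x hx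
    exact hfx (hφx f ▸ hφ f (Submodule.subset_span hf))
  ext f
  simp [hφx, hx]

end Real

end WeakDual

theorem stmt12_general (X : Type u) [NormedAddCommGroup X] [NormedSpace ℝ X]
    (hds : ∀ A : Set (WeakDual ℝ X), Dense A → SeparableSpace ↥A)
    (F : Set (WeakDual ℝ X)) (hF : ∀ x : X, x ≠ 0 → ∃ f ∈ F, f x ≠ 0) :
    ∃ F₀ ⊆ F, F₀.Countable ∧ ∀ x : X, x ≠ 0 → ∃ f ∈ F₀, f x ≠ 0 := by
  have hdense := WeakDual.dense_span_of_separating hF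
  have := hds _ hdense
  obtain ⟨F₀, hF₀F, hF₀c, hspan⟩ :=
    Submodule.exists_countable_subset_span_subset_closure (R := ℝ) F
  have hdense₀ : Dense (Submodule.span ℝ F₀ : Set (WeakDual ℝ X)) :=
    dense_closure.mp (hdense.mono hspan)
  exact ⟨F₀, hF₀F, hF₀c, fun x hx => WeakDual.exists_mem_apply_ne_zero_of_dense_span hdense₀ hx⟩

/-- If the dual of a Banach space `X`, with the weak-star topology, is
dense-separable, then `X` has the Countable Separation Property: every point-separating
family `F ⊆ X*` contains a countable point-separating subfamily. -/
theorem stmt12 (X : Type u) [NormedAddCommGroup X] [NormedSpace ℝ X] [CompleteSpace X]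
    (hds : ∀ A : Set (WeakDual ℝ X), Dense A → SeparableSpace ↥A)
    (F : Set (WeakDual ℝ X)) (hF : ∀ x : X, x ≠ 0 → ∃ f ∈ F, f x ≠ 0) :
    ∃ F₀ ⊆ F, F₀.Countable ∧ ∀ x : X, x ≠ 0 → ∃ f ∈ F₀, f x ≠ 0 :=
  stmt12_general X hds F hF
end

section
/- For topological spaces X and Y with π(X) ≤ κ and a winning strategy for Player I in the open-point game G_{Y,κ⁺} (κ infinite), the product X × Y satisfies δ(X × Y) ≤ κ: every dense subset of X × Y has density at most κ. In particular δ(X × Y) ≤ π(X) ∨ gd(Y). -/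
open Cardinal Set TopologicalSpace

universe u

section Aux

open scoped Classical

variable {X Y : Type u} [TopologicalSpace X] [TopologicalSpace Y]

/-- The history (second components) of a run, cut off at stage `β`. -/
noncomputable def histOf (g : Ordinal.{u} → X × Y) (pt : X × Y) (β : Ordinal.{u}) : Ordinal.{u} → Y :=
  fun α => if _ : α < β then (g α).2 else pt.2

/-- A run of the game where Player II always answers with a point of `D` whose first
coordinate lies in `B`, if possible. -/
noncomputable def runGame (U : (Ordinal.{u} → Y) → Ordinal.{u} → Set Y)
    (D : Set (X × Y)) (B : Set X) (pt : X × Y) : Ordinal.{u} → X × Y :=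
  Ordinal.lt_wf.fix fun β ih =>
    if h : (D ∩ B ×ˢ U (fun α => if hα : α < β then (ih α hα).2 else pt.2) β).Nonempty
    then h.choose else pt

theorem runGame_eq (U : (Ordinal.{u} → Y) → Ordinal.{u} → Set Y)
    (D : Set (X × Y)) (B : Set X) (pt : X × Y) (β : Ordinal.{u}) :
    runGame U D B pt β =
      if h : (D ∩ B ×ˢ U (histOf (runGame U D B pt) pt β) β).Nonempty
      then h.choose else pt := by
  unfold runGame
  rw [WellFounded.fix_eq]
  rfl

theorem run_key {θ : Ordinal.{u}} {κ : Cardinal.{u}}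
    (hθ : ∀ β < θ, β.card ≤ κ)
    (hwin : PlayerIWins Y θ)
    {D : Set (X × Y)} (hD : Dense D) {B : Set X} (hBo : IsOpen B) (hBne : B.Nonempty)
    (pt : X × Y) :
    ∃ E : Set (X × Y), E ⊆ D ∧ #E ≤ κ ∧
      ∀ V : Set Y, IsOpen V → V.Nonempty → ∃ p ∈ E, p.1 ∈ B ∧ p.2 ∈ V := by
  obtain ⟨U, hU1, hU2, hU3⟩ := hwin
  set g : Ordinal.{u} → X × Y := runGame U D B pt with hg
  set x : Ordinal.{u} → Y := fun α => (g α).2 with hx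
  have hhist : ∀ β, U (histOf g pt β) β = U x β := by
    intro β
    refine hU2 _ _ β (fun α hα => ?_)
    simp [histOf, hα, hx]
  have hps : ∀ β, PlayedSet (histOf g pt β) β = PlayedSet x β := by
    intro β
    ext p
    simp only [PlayedSet, mem_setOf_eq]
    constructor <;> rintro ⟨α, hα, h⟩ <;>
      exact ⟨α, hα, by simpa [histOf, hα, hx] using h⟩
  have key : ∀ β, ¬ Dense (PlayedSet x β) →
      g β ∈ D ∩ B ×ˢ U x β := by
    intro β hβ
    obtain ⟨ho, hne⟩ := hU1 x β hβ
    have h1 : (D ∩ B ×ˢ U (histOf g pt β) β).Nonempty := by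
      rw [hhist]
      obtain ⟨q, hq1, hq2⟩ := hD.inter_open_nonempty (B ×ˢ U x β) (hBo.prod ho)
        (hBne.prod hne)
      exact ⟨q, hq2, hq1⟩
    have heq := runGame_eq U D B pt β
    rw [dif_pos h1] at heq
    have hmem := h1.choose_spec
    rw [← heq] at hmem
    rw [hhist] at hmem
    exact hmem
  have legal : ∀ β < θ, ¬ Dense (PlayedSet x β) → x β ∈ U x β := by
    intro β _ hβ
    exact (key β hβ).2.2
  obtain ⟨β', hβ', hdense'⟩ := hU3 x legal
  set S : Set Ordinal.{u} := {β | Dense (PlayedSet x β)} with hS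
  have hSne : S.Nonempty := ⟨β', hdense'⟩
  have hβ₀S : sInf S ∈ S := csInf_mem hSne
  have hβ₀θ : sInf S < θ := lt_of_le_of_lt (csInf_le' hdense') hβ'
  have hmin : ∀ α < sInf S, ¬ Dense (PlayedSet x α) := by
    intro α hα hd
    exact absurd hα (csInf_le' (show α ∈ S from hd)).not_gt
  refine ⟨g '' Iio (sInf S), ?_, ?_, ?_⟩
  · rintro p ⟨α, hα, rfl⟩
    exact (key α (hmin α hα)).1
  · have h1 : Cardinal.lift.{u+1} #(g '' Iio (sInf S)) ≤ Cardinal.lift.{u} #(Iio (sInf S)) :=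
      Cardinal.mk_image_le_lift
    rw [Ordinal.mk_Iio_ordinal, Cardinal.lift_lift] at h1
    have h2 : #(g '' Iio (sInf S)) ≤ (sInf S).card := by
      rwa [Cardinal.lift_le] at h1
    exact h2.trans (hθ _ hβ₀θ)
  · intro V hV hVne
    obtain ⟨q, hq1, hq2⟩ := hβ₀S.inter_open_nonempty V hV hVne
    obtain ⟨α, hα, hxα⟩ := hq2
    refine ⟨g α, ⟨α, hα, rfl⟩, (key α (hmin α hα)).2.1, ?_⟩
    show x α ∈ V
    rw [hxα]
    exact hq1

end Aux

/-- If `π(X) ≤ κ` and Player I has a winning strategy in the open-point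
game `G_{Y,κ⁺}` (κ infinite), then every dense subset of `X × Y` has density at most
`κ`, i.e. `δ(X × Y) ≤ κ`. -/
theorem stmt19 {X Y : Type u} [TopologicalSpace X] [TopologicalSpace Y]
    (κ : Cardinal.{u}) (hκ : ℵ₀ ≤ κ) (hπ : piWeight X ≤ κ)
    (hwin : PlayerIWins Y (Order.succ κ).ord) :
    deltaCard (X × Y) ≤ κ := by
  haveI : Nonempty {D : Set (X × Y) // Dense D} := ⟨⟨univ, dense_univ⟩⟩
  unfold deltaCard
  refine ciSup_le ?_
  rintro ⟨D, hD⟩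
  suffices h : ∃ E : Set (X × Y), E ⊆ D ∧ Dense E ∧ #E ≤ κ by
    obtain ⟨E, hED, hEdense, hEcard⟩ := h
    have hSdense : Dense (Subtype.val ⁻¹' E : Set ↥D) := by
      intro d
      rw [closure_subtype]
      have himg : Subtype.val '' (Subtype.val ⁻¹' E : Set ↥D) = E := by
        rw [Subtype.image_preimage_coe]
        exact inter_eq_self_of_subset_right hED
      rw [himg]
      exact hEdense _
    unfold densityCard
    refine le_trans (csInf_le' ⟨_, hSdense, rfl⟩) ?_
    exact le_trans (Cardinal.mk_preimage_of_injective _ _ Subtype.val_injective) hEcard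
  by_cases hne : Nonempty (X × Y)
  · obtain ⟨pt⟩ := hne
    have hPmem : piWeight X ∈ {c | ∃ B : Set (Set X), IsPiBase B ∧ #B = c} := by
      refine csInf_mem ⟨#{U : Set X | IsOpen U ∧ U.Nonempty}, ?_⟩
      exact ⟨{U : Set X | IsOpen U ∧ U.Nonempty},
        ⟨fun U hU => hU, fun U hUo hUne => ⟨U, ⟨hUo, hUne⟩, subset_rfl⟩⟩, rfl⟩
    obtain ⟨P, hP, hPcard⟩ := hPmem
    have hPκ : #P ≤ κ := hPcard ▸ hπ
    have hθ : ∀ β < (Order.succ κ).ord, β.card ≤ κ := by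
      intro β hβ
      exact Order.lt_succ_iff.mp (Cardinal.lt_ord.mp hβ)
    have key := fun (B : ↥P) =>
      run_key hθ hwin hD (hP.1 B.1 B.2).1 (hP.1 B.1 B.2).2 pt
    choose EB hEB1 hEB2 hEB3 using key
    refine ⟨⋃ B : ↥P, EB B, iUnion_subset fun B => hEB1 B, ?_, ?_⟩
    · rw [dense_iff_inter_open]
      intro W hW hWne
      obtain ⟨⟨a, b⟩, hab⟩ := hWne
      obtain ⟨V, V', hV, hV', haV, hbV', hsub⟩ := isOpen_prod_iff.mp hW a b hab
      obtain ⟨B, hBP, hBV⟩ := hP.2 V hV ⟨a, haV⟩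
      obtain ⟨p, hpE, hp1, hp2⟩ := hEB3 ⟨B, hBP⟩ V' hV' ⟨b, hbV'⟩
      exact ⟨p, hsub ⟨hBV hp1, hp2⟩, mem_iUnion.mpr ⟨⟨B, hBP⟩, hpE⟩⟩
    · refine le_trans (Cardinal.mk_iUnion_le _) ?_
      refine le_trans (mul_le_mul' hPκ (ciSup_le' fun B => hEB2 B)) ?_
      exact le_of_eq (Cardinal.mul_eq_self hκ)
  · refine ⟨∅, empty_subset _, ?_, by simp⟩
    intro p
    exact absurd ⟨p⟩ hne
end
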